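/- arXiv:2404.02538 — 4 statements merged into one kernel-verified Lean document; each statement's English description precedes it below -/
import Mathlib

section
/- For every t ∈ (0,1) and every x ∈ ℝ^d, the function φ_t is differentiable at x with strictly positive value, and the velocity field satisfies v*(x, t) = (1/t) ∇_x log φ_t(x) + (1/t) x. (Since the density of the law π_t of t X₁ + √(1−t²) X₀ is proportional to φ_t, this says v*(x,t) = (1/t)∇_x log π_t(x) + x/t.) -/
open MeasureTheory

/-- The Gaussian kernel `g_t(x, x₁) = exp(-‖x - t x₁‖² / (2(1-t²)))`. -/
noncomputable def gKer (d : ℕ) (t : ℝ) (x x₁ : EuclideanSpace ℝ (Fin d)) : ℝ :=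
  Real.exp (-‖x - t • x₁‖ ^ 2 / (2 * (1 - t ^ 2)))

/-- `φ_t(x) = ∫ g_t(x, x₁) dπ₁(x₁)`. -/
noncomputable def phiFn (d : ℕ) (π₁ : MeasureTheory.Measure (EuclideanSpace ℝ (Fin d))) (t : ℝ)
    (x : EuclideanSpace ℝ (Fin d)) : ℝ :=
  ∫ x₁, gKer d t x x₁ ∂π₁

/-- `m_t(x) = φ_t(x)⁻¹ ∫ x₁ g_t(x, x₁) dπ₁(x₁)`. -/
noncomputable def mFn (d : ℕ) (π₁ : MeasureTheory.Measure (EuclideanSpace ℝ (Fin d))) (t : ℝ)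
    (x : EuclideanSpace ℝ (Fin d)) : EuclideanSpace ℝ (Fin d) :=
  (phiFn d π₁ t x)⁻¹ • ∫ x₁, gKer d t x x₁ • x₁ ∂π₁

/-- The velocity field `v*(x, t) = (1/(1-t²)) m_t(x) - (t/(1-t²)) x`. -/
noncomputable def vStar (d : ℕ) (π₁ : MeasureTheory.Measure (EuclideanSpace ℝ (Fin d)))
    (x : EuclideanSpace ℝ (Fin d)) (t : ℝ) : EuclideanSpace ℝ (Fin d) :=
  (1 / (1 - t ^ 2)) • mFn d π₁ t x - (t / (1 - t ^ 2)) • x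

section aux
variable {d : ℕ} {t : ℝ}

local notation "E" => EuclideanSpace ℝ (Fin d)

lemma gKer_pos (x x₁ : E) : 0 < gKer d t x x₁ := Real.exp_pos _

lemma gKer_le_one (ht : t ^ 2 < 1) (x x₁ : E) : gKer d t x x₁ ≤ 1 := by
  rw [gKer, Real.exp_le_one_iff]
  apply div_nonpos_of_nonpos_of_nonneg
  · simp [sq_nonneg]
  · nlinarith

lemma gKer_cont (x : E) : Continuous (fun x₁ : E => gKer d t x x₁) := by
  unfold gKer; fun_prop

/-- The pointwise `x`-derivative of the Gaussian kernel. -/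
noncomputable def gKerD (d : ℕ) (t : ℝ) (y a : EuclideanSpace ℝ (Fin d)) :
    EuclideanSpace ℝ (Fin d) →L[ℝ] ℝ :=
  (-(1 - t ^ 2)⁻¹ * gKer d t y a) • innerSL ℝ (y - t • a)

lemma gKer_hasFDerivAt (x₁ y : E) :
    HasFDerivAt (fun z : E => gKer d t z x₁) (gKerD d t y x₁) y := by
  have h1 : HasFDerivAt (fun z : E => z - t • x₁) (ContinuousLinearMap.id ℝ E) y := by
    simpa using (hasFDerivAt_id y).sub_const (t • x₁)
  have h2 := h1.norm_sq
  have h3 := h2.const_mul (-(2 * (1 - t ^ 2))⁻¹)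
  have h4 := (Real.hasDerivAt_exp ((-(2 * (1 - t ^ 2))⁻¹) * ‖y - t • x₁‖ ^ 2)).comp_hasFDerivAt y h3
  have hfun : (fun z : E => Real.exp (-(2 * (1 - t ^ 2))⁻¹ * ‖z - t • x₁‖ ^ 2))
      = fun z : E => gKer d t z x₁ := by
    funext z; rw [gKer]; ring_nf
  simp only [Function.comp_def] at h4
  rw [hfun] at h4
  refine h4.congr_fderiv ?_
  ext v
  have : gKer d t y x₁ = Real.exp (-(2 * (1 - t ^ 2))⁻¹ * ‖y - t • x₁‖ ^ 2) := by
    rw [gKer]; ring_nf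
  simp [gKerD, this, ContinuousLinearMap.smul_apply, innerSL_apply_apply]
  ring

lemma gKerD_norm_le (ht2 : t ^ 2 < 1) (y a : E) :
    ‖gKerD d t y a‖ ≤ (1 - t ^ 2)⁻¹ * ‖y - t • a‖ := by
  have hc : (0:ℝ) < 1 - t ^ 2 := by linarith
  refine ContinuousLinearMap.opNorm_le_bound _ (by positivity) fun v => ?_
  have hval : gKerD d t y a v = (-(1 - t ^ 2)⁻¹ * gKer d t y a) * inner ℝ (y - t • a) v := by
    simp only [gKerD, ContinuousLinearMap.smul_apply, innerSL_apply_apply, smul_eq_mul]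
  rw [hval, Real.norm_eq_abs, abs_mul, abs_mul, abs_neg, abs_of_pos (inv_pos.mpr hc),
    abs_of_pos (gKer_pos y a)]
  have hin : |(inner ℝ (y - t • a) v : ℝ)| ≤ ‖y - t • a‖ * ‖v‖ := abs_real_inner_le_norm _ _
  have hg := gKer_le_one ht2 y a
  have hgp := (gKer_pos (t := t) y a).le
  have h1 : gKer d t y a * |(inner ℝ (y - t • a) v : ℝ)| ≤ ‖y - t • a‖ * ‖v‖ := by
    have h2 := mul_le_mul_of_nonneg_right hg (abs_nonneg (inner ℝ (y - t • a) v : ℝ))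
    rw [one_mul] at h2
    linarith
  have h4 := mul_le_mul_of_nonneg_left h1 (inv_pos.mpr hc).le
  nlinarith [h4]

lemma gKerD_cont (x : E) : Continuous (fun a : E => gKerD d t x a) := by
  unfold gKerD
  apply Continuous.fun_smul
  · exact continuous_const.mul (gKer_cont x)
  · exact (innerSL ℝ).continuous.comp (continuous_const.sub (continuous_const.fun_smul continuous_id))

lemma gKerD_eq_innerSL (y a : E) :
    gKerD d t y a
      = innerSL ℝ ((-(1 - t ^ 2)⁻¹) • ((gKer d t y a) • y - t • (gKer d t y a • a))) := by
  have hv : (-(1 - t ^ 2)⁻¹) • ((gKer d t y a) • y - t • (gKer d t y a • a))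
      = (-(1 - t ^ 2)⁻¹ * gKer d t y a) • (y - t • a) := by
    rw [smul_sub, smul_sub, smul_smul, smul_smul, smul_smul, smul_smul]
    ring_nf
  rw [gKerD, hv, _root_.map_smul]

lemma norm_le_sqrt_of_cube {x₁ : E} (h : ∀ i, x₁ i ∈ Set.Icc (0 : ℝ) 1) :
    ‖x₁‖ ≤ Real.sqrt d := by
  rw [EuclideanSpace.norm_eq]
  apply Real.sqrt_le_sqrt
  calc ∑ i, ‖x₁ i‖ ^ 2 ≤ ∑ _i : Fin d, (1 : ℝ) := by
        apply Finset.sum_le_sum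
        intro i _
        have := h i
        rw [Real.norm_eq_abs, sq_abs]
        nlinarith [this.1, this.2]
    _ = d := by simp

lemma gKer_integrable (π₁ : Measure (EuclideanSpace ℝ (Fin d))) [IsProbabilityMeasure π₁]
    (ht2 : t ^ 2 < 1) (x : E) :
    Integrable (fun x₁ : E => gKer d t x x₁) π₁ := by
  refine Integrable.mono' (integrable_const 1) ((gKer_cont x).aestronglyMeasurable) ?_
  filter_upwards with a
  rw [Real.norm_eq_abs, abs_of_pos (gKer_pos x a)]
  exact gKer_le_one ht2 x a

lemma gKer_smul_integrable (π₁ : Measure (EuclideanSpace ℝ (Fin d))) [IsProbabilityMeasure π₁]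
    (ht2 : t ^ 2 < 1)
    (hnorm : ∀ᵐ x₁ ∂π₁, ‖x₁‖ ≤ Real.sqrt d) (x : E) :
    Integrable (fun x₁ : E => gKer d t x x₁ • x₁) π₁ := by
  refine Integrable.mono' (integrable_const (Real.sqrt d))
    (Continuous.aestronglyMeasurable (by exact (gKer_cont x).smul continuous_id)) ?_
  filter_upwards [hnorm] with a ha
  rw [norm_smul, Real.norm_eq_abs, abs_of_pos (gKer_pos x a)]
  calc gKer d t x a * ‖a‖ ≤ 1 * ‖a‖ :=
        mul_le_mul_of_nonneg_right (gKer_le_one ht2 x a) (norm_nonneg a)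
    _ ≤ Real.sqrt d := by simpa using ha

/-- The key differentiation-under-the-integral step. -/
lemma phiFn_hasFDerivAt (π₁ : Measure (EuclideanSpace ℝ (Fin d))) [IsProbabilityMeasure π₁]
    (ht0 : 0 < t) (ht1 : t < 1)
    (hnorm : ∀ᵐ x₁ ∂π₁, ‖x₁‖ ≤ Real.sqrt d) (x : E) :
    HasFDerivAt (phiFn d π₁ t)
      (innerSL ℝ ((-(1 - t ^ 2)⁻¹) •
        ((phiFn d π₁ t x) • x - t • ∫ x₁, gKer d t x x₁ • x₁ ∂π₁))) x := by
  have ht2 : t ^ 2 < 1 := by nlinarith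
  have hc : (0:ℝ) < 1 - t ^ 2 := by linarith
  have hg_int := gKer_integrable π₁ ht2 x
  have hgx_int := gKer_smul_integrable π₁ ht2 hnorm x
  have h_bound : ∀ᵐ a ∂π₁, ∀ y ∈ Metric.ball x 1,
      ‖gKerD d t y a‖ ≤ (1 - t ^ 2)⁻¹ * (‖x‖ + 1 + Real.sqrt d) := by
    filter_upwards [hnorm] with a ha y hy
    refine le_trans (gKerD_norm_le ht2 y a) ?_
    have hn : ‖y - t • a‖ ≤ ‖x‖ + 1 + Real.sqrt d := by
      have h1 : ‖y - t • a‖ ≤ ‖y - x‖ + ‖x - t • a‖ := by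
        calc ‖y - t • a‖ = ‖(y - x) + (x - t • a)‖ := by abel_nf
          _ ≤ _ := norm_add_le _ _
      have h2 : ‖y - x‖ ≤ 1 := by
        rw [← dist_eq_norm]; exact (Metric.mem_ball.mp hy).le
      have h3 : ‖x - t • a‖ ≤ ‖x‖ + Real.sqrt d := by
        calc ‖x - t • a‖ ≤ ‖x‖ + ‖t • a‖ := norm_sub_le _ _
          _ ≤ ‖x‖ + Real.sqrt d := by
              rw [norm_smul, Real.norm_eq_abs, abs_of_pos ht0]
              nlinarith [norm_nonneg a, Real.sqrt_nonneg (d:ℝ)]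
      linarith
    exact mul_le_mul_of_nonneg_left hn (inv_pos.mpr hc).le
  have hF_meas : ∀ᶠ y in nhds x, AEStronglyMeasurable (fun a => gKer d t y a) π₁ :=
    Filter.Eventually.of_forall fun y => (gKer_cont y).aestronglyMeasurable
  have hF'_meas : AEStronglyMeasurable (fun a => gKerD d t x a) π₁ :=
    (gKerD_cont x).aestronglyMeasurable
  have h_diff : ∀ᵐ a ∂π₁, ∀ y ∈ Metric.ball x 1,
      HasFDerivAt (fun z => gKer d t z a) (gKerD d t y a) y :=
    Filter.Eventually.of_forall fun a y _ => gKer_hasFDerivAt a y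
  have key := hasFDerivAt_integral_of_dominated_of_fderiv_le (μ := π₁)
    (F := fun y a => gKer d t y a) (F' := fun y a => gKerD d t y a)
    (bound := fun _ => (1 - t ^ 2)⁻¹ * (‖x‖ + 1 + Real.sqrt d))
    (Metric.ball_mem_nhds x one_pos) hF_meas hg_int hF'_meas h_bound (integrable_const _) h_diff
  have hint_f : Integrable
      (fun a : E => (-(1 - t ^ 2)⁻¹) • ((gKer d t x a) • x - t • (gKer d t x a • a))) π₁ :=
    ((hg_int.smul_const x).sub (hgx_int.smul t)).smul (-(1 - t ^ 2)⁻¹)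
  have hderiv_eq : (∫ a, gKerD d t x a ∂π₁)
      = innerSL ℝ ((-(1 - t ^ 2)⁻¹) •
        ((phiFn d π₁ t x) • x - t • ∫ x₁, gKer d t x x₁ • x₁ ∂π₁)) := by
    have : (fun a : E => gKerD d t x a)
        = fun a => innerSL ℝ ((-(1 - t ^ 2)⁻¹) •
            ((gKer d t x a) • x - t • (gKer d t x a • a))) := by
      funext a; exact gKerD_eq_innerSL x a
    rw [this, ContinuousLinearMap.integral_comp_comm _ hint_f]
    congr 1
    have hgx2 : Integrable (fun a : E => t • (gKer d t x a • a)) π₁ := hgx_int.smul t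
    have hgx3 : Integrable (fun a : E => gKer d t x a • x) π₁ := hg_int.smul_const x
    rw [integral_smul, integral_sub hgx3 hgx2, integral_smul_const, integral_smul]
    rfl
  rw [hderiv_eq] at key
  exact key

end aux

/-- For every `t ∈ (0,1)` and every `x`, `φ_t` is differentiable at `x` with strictly
positive value, and `v*(x,t) = (1/t) ∇ₓ log φ_t(x) + (1/t) x`. -/
theorem velocity_eq_score_form
    (d : ℕ) (hd : 1 ≤ d)
    (π₁ : Measure (EuclideanSpace ℝ (Fin d))) [IsProbabilityMeasure π₁]
    (hsupp : ∀ᵐ x₁ ∂π₁, ∀ i, x₁ i ∈ Set.Icc (0 : ℝ) 1)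
    (t : ℝ) (ht : t ∈ Set.Ioo (0 : ℝ) 1) (x : EuclideanSpace ℝ (Fin d)) :
    DifferentiableAt ℝ (phiFn d π₁ t) x ∧ 0 < phiFn d π₁ t x ∧
      vStar d π₁ x t
        = (1 / t) • gradient (fun y => Real.log (phiFn d π₁ t y)) x + (1 / t) • x := by
  obtain ⟨ht0, ht1⟩ := ht
  have ht2 : t ^ 2 < 1 := by nlinarith
  have hc : (0:ℝ) < 1 - t ^ 2 := by linarith
  have hnorm : ∀ᵐ x₁ ∂π₁, ‖x₁‖ ≤ Real.sqrt d := by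
    filter_upwards [hsupp] with x₁ h using norm_le_sqrt_of_cube h
  have hg_int := gKer_integrable π₁ ht2 x
  -- positivity of phiFn
  have hφpos : 0 < phiFn d π₁ t x := by
    have hlow : ∀ᵐ x₁ ∂π₁,
        Real.exp (-(‖x‖ + Real.sqrt d) ^ 2 / (2 * (1 - t ^ 2))) ≤ gKer d t x x₁ := by
      filter_upwards [hnorm] with a ha
      rw [gKer, Real.exp_le_exp]
      have h1 : ‖x - t • a‖ ≤ ‖x‖ + Real.sqrt d := by
        calc ‖x - t • a‖ ≤ ‖x‖ + ‖t • a‖ := norm_sub_le _ _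
          _ ≤ ‖x‖ + Real.sqrt d := by
              rw [norm_smul, Real.norm_eq_abs, abs_of_pos ht0]
              nlinarith [norm_nonneg a, Real.sqrt_nonneg (d:ℝ)]
      have hsq : ‖x - t • a‖ ^ 2 ≤ (‖x‖ + Real.sqrt d) ^ 2 := by
        nlinarith [norm_nonneg (x - t • a)]
      gcongr
    have := integral_mono_ae
      (integrable_const (Real.exp (-(‖x‖ + Real.sqrt d) ^ 2 / (2 * (1 - t ^ 2))))) hg_int hlow
    simp only [integral_const, measure_univ, ENNReal.toReal_one, probReal_univ, smul_eq_mul, one_mul] at this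
    exact lt_of_lt_of_le (Real.exp_pos _) this
  have hφderiv := phiFn_hasFDerivAt π₁ ht0 ht1 hnorm x
  refine ⟨hφderiv.differentiableAt, hφpos, ?_⟩
  have hlog : HasFDerivAt (fun y => Real.log (phiFn d π₁ t y))
      ((phiFn d π₁ t x)⁻¹ • innerSL ℝ ((-(1 - t ^ 2)⁻¹) •
        ((phiFn d π₁ t x) • x - t • ∫ x₁, gKer d t x x₁ • x₁ ∂π₁))) x := by
    have := (Real.hasDerivAt_log hφpos.ne').comp_hasFDerivAt x hφderiv
    exact this
  have hgradAt : HasGradientAt (fun y => Real.log (phiFn d π₁ t y))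
      ((phiFn d π₁ t x)⁻¹ • ((-(1 - t ^ 2)⁻¹) •
        ((phiFn d π₁ t x) • x - t • ∫ x₁, gKer d t x x₁ • x₁ ∂π₁))) x := by
    rw [hasGradientAt_iff_hasFDerivAt]
    refine hlog.congr_fderiv ?_
    ext v
    simp [InnerProductSpace.toDual_apply_apply, real_inner_smul_left]
  rw [hgradAt.gradient]
  rw [vStar, mFn]
  ext i
  simp only [PiLp.smul_apply, PiLp.sub_apply, PiLp.add_apply, smul_eq_mul]
  have hφ0 : phiFn d π₁ t x ≠ 0 := hφpos.ne'
  have ht0' : t ≠ 0 := ht0.ne'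
  have hc0 : (1:ℝ) - t ^ 2 ≠ 0 := hc.ne'
  field_simp
  ring
end

section
/- For every t ∈ [0,1) and every x ∈ ℝ^d, the map x ↦ v*(x, t) is differentiable and its Jacobian satisfies ∇_x v*(x, t) = (t/(1−t²)²) Cov_t(x) − (t/(1−t²)) I_d. -/
open MeasureTheory
open scoped RealInnerProductSpace

/-- `M_t(x) = φ_t(x)⁻¹ ∫ x₁ x₁ᵀ g_t(x, x₁) dπ₁(x₁)` as a `d × d` matrix. -/
noncomputable def MMat (d : ℕ) (π₁ : MeasureTheory.Measure (EuclideanSpace ℝ (Fin d))) (t : ℝ)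
    (x : EuclideanSpace ℝ (Fin d)) : Matrix (Fin d) (Fin d) ℝ :=
  Matrix.of fun i j => (phiFn d π₁ t x)⁻¹ * ∫ x₁, gKer d t x x₁ * (x₁ i * x₁ j) ∂π₁

/-- The conditional covariance `Cov_t(x) = M_t(x) - m_t(x) m_t(x)ᵀ`. -/
noncomputable def covMat (d : ℕ) (π₁ : MeasureTheory.Measure (EuclideanSpace ℝ (Fin d))) (t : ℝ)
    (x : EuclideanSpace ℝ (Fin d)) : Matrix (Fin d) (Fin d) ℝ :=
  MMat d π₁ t x - Matrix.of fun i j => mFn d π₁ t x i * mFn d π₁ t x j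

/-- derivative of `gKer` in the `x` variable -/
noncomputable def Dg (d : ℕ) (t : ℝ) (y x₁ : EuclideanSpace ℝ (Fin d)) :
    EuclideanSpace ℝ (Fin d) →L[ℝ] ℝ :=
  (-(1 - t ^ 2)⁻¹ * gKer d t y x₁) • innerSL ℝ (y - t • x₁)

lemma hasFDerivAt_gKer (d : ℕ) (t : ℝ) (x₁ y : EuclideanSpace ℝ (Fin d)) :
    HasFDerivAt (fun z => gKer d t z x₁) (Dg d t y x₁) y := by
  have h1 : HasFDerivAt (fun z : EuclideanSpace ℝ (Fin d) => z - t • x₁)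
      (ContinuousLinearMap.id ℝ (EuclideanSpace ℝ (Fin d))) y := (hasFDerivAt_id y).sub_const _
  have h2 := h1.norm_sq
  have h3 := (h2.const_mul (-(2 * (1 - t ^ 2))⁻¹)).exp
  have hfun : (fun z => gKer d t z x₁)
      = fun z => Real.exp (-(2 * (1 - t ^ 2))⁻¹ * ‖z - t • x₁‖ ^ 2) := by
    funext z; unfold gKer; congr 1; ring
  rw [hfun]
  refine h3.congr_fderiv ?_
  ext h
  simp only [Dg, gKer, ContinuousLinearMap.smul_apply, innerSL_apply_apply,
    ContinuousLinearMap.coe_smul', Pi.smul_apply, ContinuousLinearMap.coe_comp',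
    Function.comp_apply, ContinuousLinearMap.coe_id', id_eq, smul_eq_mul]
  rw [show Real.exp (-(2 * (1 - t ^ 2))⁻¹ * ‖y - t • x₁‖ ^ 2)
      = Real.exp (-‖y - t • x₁‖ ^ 2 / (2 * (1 - t ^ 2))) by congr 1; ring]
  simp only [nsmul_eq_mul, Nat.cast_ofNat]
  ring_nf
  rw [show (2 - t ^ 2 * 2 : ℝ) = 2 * (1 - t ^ 2) by ring, mul_inv]
  ring

lemma gKer_le_one_s5 {d : ℕ} {t : ℝ} (ht2 : t ^ 2 < 1) (y x₁ : EuclideanSpace ℝ (Fin d)) :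
    gKer d t y x₁ ≤ 1 := by
  rw [gKer, Real.exp_le_one_iff]
  apply div_nonpos_of_nonpos_of_nonneg
  · simp [sq_nonneg]
  · nlinarith

lemma continuous_gKer {d : ℕ} (t : ℝ) (y : EuclideanSpace ℝ (Fin d)) :
    Continuous fun x₁ => gKer d t y x₁ := by
  apply Real.continuous_exp.comp
  exact (((continuous_const.sub (continuous_id.const_smul t)).norm.pow 2).neg).div_const _

lemma continuous_Dg {d : ℕ} (t : ℝ) (x : EuclideanSpace ℝ (Fin d)) :
    Continuous fun x₁ => Dg d t x x₁ := by
  refine Continuous.smul (f := fun x₁ => -(1 - t ^ 2)⁻¹ * gKer d t x x₁)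
    (g := fun x₁ => innerSL ℝ (x - t • x₁)) ?_ ?_
  · exact continuous_const.mul (continuous_gKer t x)
  · exact (innerSL ℝ).continuous.comp (continuous_const.sub (continuous_id.const_smul t))

lemma ae_norm_le {d : ℕ} {π₁ : Measure (EuclideanSpace ℝ (Fin d))}
    (hsupp : ∀ᵐ x₁ ∂π₁, ∀ i, x₁ i ∈ Set.Icc (0 : ℝ) 1) :
    ∀ᵐ x₁ ∂π₁, ‖x₁‖ ≤ Real.sqrt d := by
  filter_upwards [hsupp] with x₁ h
  rw [EuclideanSpace.norm_eq]
  apply Real.sqrt_le_sqrt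
  calc ∑ i, ‖x₁ i‖ ^ 2 ≤ ∑ _i : Fin d, (1 : ℝ) := by
        apply Finset.sum_le_sum
        intro i _
        have := h i
        rw [Real.norm_eq_abs]
        nlinarith [this.1, this.2, abs_nonneg (x₁ i), le_abs_self (x₁ i), abs_le.mpr ⟨by linarith [this.1], this.2⟩]
    _ = d := by simp

lemma norm_Dg_le {d : ℕ} {t : ℝ} (ht2 : t ^ 2 < 1) (ht0 : 0 ≤ t) (ht1 : t ≤ 1)
    (y x₁ : EuclideanSpace ℝ (Fin d)) :
    ‖Dg d t y x₁‖ ≤ (1 - t ^ 2)⁻¹ * (‖y‖ + ‖x₁‖) := by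
  have hc : (0:ℝ) < 1 - t ^ 2 := by linarith
  rw [Dg]
  refine le_trans (norm_smul_le (-(1 - t ^ 2)⁻¹ * gKer d t y x₁) ((innerSL ℝ) (y - t • x₁))) ?_
  rw [innerSL_apply_norm]
  have h1 : ‖(-(1 - t ^ 2)⁻¹ * gKer d t y x₁)‖ ≤ (1 - t ^ 2)⁻¹ := by
    rw [Real.norm_eq_abs, abs_mul, abs_neg, abs_inv, abs_of_pos hc,
      abs_of_pos (show (0:ℝ) < gKer d t y x₁ from Real.exp_pos _)]
    calc (1 - t ^ 2)⁻¹ * gKer d t y x₁ ≤ (1 - t ^ 2)⁻¹ * 1 := by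
          exact mul_le_mul_of_nonneg_left (gKer_le_one_s5 ht2 y x₁) (by positivity)
      _ = (1 - t ^ 2)⁻¹ := mul_one _
  have h2 : ‖y - t • x₁‖ ≤ ‖y‖ + ‖x₁‖ := by
    calc ‖y - t • x₁‖ ≤ ‖y‖ + ‖t • x₁‖ := norm_sub_le _ _
      _ ≤ ‖y‖ + ‖x₁‖ := by
          rw [norm_smul, Real.norm_eq_abs, abs_of_nonneg ht0]
          nlinarith [norm_nonneg x₁]
  calc ‖(-(1 - t ^ 2)⁻¹ * gKer d t y x₁)‖ * ‖y - t • x₁‖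
      ≤ (1 - t ^ 2)⁻¹ * (‖y‖ + ‖x₁‖) :=
    mul_le_mul h1 h2 (norm_nonneg _) (by positivity)

lemma key {d : ℕ} {π₁ : Measure (EuclideanSpace ℝ (Fin d))} [IsProbabilityMeasure π₁]
    {G : Type*} [NormedAddCommGroup G] [NormedSpace ℝ G] [CompleteSpace G]
    {t : ℝ} (ht0 : 0 ≤ t) (ht1 : t < 1)
    (hsupp : ∀ᵐ x₁ ∂π₁, ∀ i, x₁ i ∈ Set.Icc (0 : ℝ) 1)
    (x : EuclideanSpace ℝ (Fin d))
    (w : EuclideanSpace ℝ (Fin d) → G) (hw : Continuous w) {B : ℝ} (hB0 : 0 ≤ B)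
    (hwB : ∀ᵐ x₁ ∂π₁, ‖w x₁‖ ≤ B) :
    HasFDerivAt (fun y => ∫ x₁, gKer d t y x₁ • w x₁ ∂π₁)
      (∫ x₁, (Dg d t x x₁).smulRight (w x₁) ∂π₁) x ∧
    Integrable (fun x₁ => (Dg d t x x₁).smulRight (w x₁)) π₁ := by
  have ht2 : t ^ 2 < 1 := by nlinarith
  have hc : (0:ℝ) < 1 - t ^ 2 := by linarith
  have hnx := ae_norm_le hsupp
  -- measurability of the integrand family
  have hFm : ∀ y : EuclideanSpace ℝ (Fin d),
      AEStronglyMeasurable (fun x₁ => gKer d t y x₁ • w x₁) π₁ :=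
    fun y => ((continuous_gKer t y).smul hw).aestronglyMeasurable
  -- measurability of the derivative family
  have hF'm : AEStronglyMeasurable (fun x₁ => (Dg d t x x₁).smulRight (w x₁)) π₁ := by
    have hcont : Continuous fun x₁ => (Dg d t x x₁).smulRight (w x₁) := by
      exact (isBoundedBilinearMap_smulRight (𝕜 := ℝ)).continuous.comp
        ((continuous_Dg t x).prodMk hw)
    haveI : SecondCountableTopologyEither (EuclideanSpace ℝ (Fin d))
        (EuclideanSpace ℝ (Fin d) →L[ℝ] G) :=
      secondCountableTopologyEither_of_left _ _
    exact hcont.aestronglyMeasurable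
  -- integrability at x
  have hFint : ∀ y : EuclideanSpace ℝ (Fin d),
      Integrable (fun x₁ => gKer d t y x₁ • w x₁) π₁ := by
    intro y
    refine (integrable_const B).mono' (hFm y) ?_
    filter_upwards [hwB] with x₁ hwx
    rw [norm_smul, Real.norm_eq_abs, abs_of_pos (show (0:ℝ) < gKer d t y x₁ from Real.exp_pos _)]
    calc gKer d t y x₁ * ‖w x₁‖ ≤ 1 * B :=
      mul_le_mul (gKer_le_one_s5 ht2 y x₁) hwx (norm_nonneg _) zero_le_one
    _ = B := one_mul B
  -- uniform bound for the derivatives on the unit ball around x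
  have hbd : ∀ᵐ x₁ ∂π₁, ∀ y ∈ Metric.ball x 1,
      ‖(Dg d t y x₁).smulRight (w x₁)‖ ≤ (1 - t ^ 2)⁻¹ * (‖x‖ + 1 + Real.sqrt d) * B := by
    filter_upwards [hnx, hwB] with x₁ hx₁ hwx y hy
    rw [ContinuousLinearMap.norm_smulRight_apply]
    have h1 : ‖Dg d t y x₁‖ ≤ (1 - t ^ 2)⁻¹ * (‖x‖ + 1 + Real.sqrt d) := by
      refine le_trans (norm_Dg_le ht2 ht0 ht1.le y x₁) ?_
      have hny : ‖y‖ ≤ ‖x‖ + 1 := by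
        have := mem_ball_iff_norm.mp hy
        calc ‖y‖ = ‖x + (y - x)‖ := by congr 1; abel
          _ ≤ ‖x‖ + ‖y - x‖ := norm_add_le _ _
          _ ≤ ‖x‖ + 1 := by linarith
      have : ‖y‖ + ‖x₁‖ ≤ ‖x‖ + 1 + Real.sqrt d := by linarith
      exact mul_le_mul_of_nonneg_left this (by positivity)
    calc ‖Dg d t y x₁‖ * ‖w x₁‖ ≤ ((1 - t ^ 2)⁻¹ * (‖x‖ + 1 + Real.sqrt d)) * B :=
      mul_le_mul h1 hwx (norm_nonneg _) (by positivity)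
    _ = (1 - t ^ 2)⁻¹ * (‖x‖ + 1 + Real.sqrt d) * B := by ring
  constructor
  · refine hasFDerivAt_integral_of_dominated_of_fderiv_le (Metric.ball_mem_nhds x one_pos)
      (Filter.Eventually.of_forall fun y => hFm y) (hFint x) hF'm hbd (integrable_const _) ?_
    filter_upwards with x₁ y _
    exact (hasFDerivAt_gKer d t x₁ y).smul_const (w x₁)
  · refine (integrable_const ((1 - t ^ 2)⁻¹ * (‖x‖ + 1 + Real.sqrt d) * B)).mono' hF'm ?_
    filter_upwards [hbd] with x₁ h
    exact h x (Metric.mem_ball_self one_pos)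

lemma integrable_gKer_mul {d : ℕ} {π₁ : Measure (EuclideanSpace ℝ (Fin d))}
    [IsProbabilityMeasure π₁] {t : ℝ} (ht2 : t ^ 2 < 1) (x : EuclideanSpace ℝ (Fin d))
    (f : EuclideanSpace ℝ (Fin d) → ℝ) (hf : Continuous f)
    (hb : ∀ᵐ x₁ ∂π₁, |f x₁| ≤ 1) :
    Integrable (fun x₁ => gKer d t x x₁ * f x₁) π₁ := by
  refine (integrable_const (1:ℝ)).mono'
    (((continuous_gKer t x).mul hf).aestronglyMeasurable) ?_
  filter_upwards [hb] with x₁ h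
  rw [Real.norm_eq_abs, abs_mul,
    abs_of_pos (show (0:ℝ) < gKer d t x x₁ from Real.exp_pos _)]
  calc gKer d t x x₁ * |f x₁| ≤ 1 * 1 :=
    mul_le_mul (gKer_le_one_s5 ht2 x x₁) h (abs_nonneg _) zero_le_one
  _ = 1 := one_mul 1

lemma integrable_gKer_smul {d : ℕ} {π₁ : Measure (EuclideanSpace ℝ (Fin d))}
    [IsProbabilityMeasure π₁] {t : ℝ} (ht2 : t ^ 2 < 1) (x : EuclideanSpace ℝ (Fin d))
    (hsupp : ∀ᵐ x₁ ∂π₁, ∀ i, x₁ i ∈ Set.Icc (0 : ℝ) 1) :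
    Integrable (fun x₁ => gKer d t x x₁ • x₁) π₁ := by
  refine (integrable_const (Real.sqrt d)).mono'
    (((continuous_gKer t x).smul continuous_id).aestronglyMeasurable) ?_
  filter_upwards [ae_norm_le hsupp] with x₁ h
  rw [norm_smul, Real.norm_eq_abs,
    abs_of_pos (show (0:ℝ) < gKer d t x x₁ from Real.exp_pos _)]
  calc gKer d t x x₁ * ‖x₁‖ ≤ 1 * Real.sqrt d :=
    mul_le_mul (gKer_le_one_s5 ht2 x x₁) h (norm_nonneg _) zero_le_one
  _ = Real.sqrt d := one_mul _

lemma phiFn_pos {d : ℕ} {π₁ : Measure (EuclideanSpace ℝ (Fin d))}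
    [IsProbabilityMeasure π₁] {t : ℝ} (ht0 : 0 ≤ t) (ht2 : t ^ 2 < 1)
    (x : EuclideanSpace ℝ (Fin d))
    (hsupp : ∀ᵐ x₁ ∂π₁, ∀ i, x₁ i ∈ Set.Icc (0 : ℝ) 1) :
    0 < phiFn d π₁ t x := by
  have hg_int : Integrable (fun x₁ => gKer d t x x₁) π₁ := by
    have := integrable_gKer_mul (π₁ := π₁) ht2 x (fun _ => 1) continuous_const
      (Filter.Eventually.of_forall fun _ => by norm_num)
    simpa using this
  have hlow : ∀ᵐ x₁ ∂π₁,
      Real.exp (-(‖x‖ + Real.sqrt d) ^ 2 / (2 * (1 - t ^ 2))) ≤ gKer d t x x₁ := by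
    filter_upwards [ae_norm_le hsupp] with x₁ h
    rw [gKer, Real.exp_le_exp]
    have h2c : (0:ℝ) < 2 * (1 - t ^ 2) := by nlinarith
    rw [div_le_div_iff_of_pos_right h2c, neg_le_neg_iff]
    have hu : ‖x - t • x₁‖ ≤ ‖x‖ + Real.sqrt d := by
      calc ‖x - t • x₁‖ ≤ ‖x‖ + ‖t • x₁‖ := norm_sub_le _ _
        _ ≤ ‖x‖ + Real.sqrt d := by
            rw [norm_smul, Real.norm_eq_abs, abs_of_nonneg ht0]
            nlinarith [norm_nonneg x₁, Real.sqrt_nonneg (d:ℝ), h]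
    nlinarith [norm_nonneg (x - t • x₁), norm_nonneg x, Real.sqrt_nonneg (d:ℝ)]
  calc (0:ℝ) < Real.exp (-(‖x‖ + Real.sqrt d) ^ 2 / (2 * (1 - t ^ 2))) := Real.exp_pos _
    _ = ∫ _x₁, Real.exp (-(‖x‖ + Real.sqrt d) ^ 2 / (2 * (1 - t ^ 2))) ∂π₁ := by
        rw [integral_const, probReal_univ, one_smul]
    _ ≤ ∫ x₁, gKer d t x x₁ ∂π₁ := integral_mono_ae (integrable_const _) hg_int hlow
    _ = phiFn d π₁ t x := rfl

/-- For every `t ∈ [0,1)` and every `x`, the map `x ↦ v*(x,t)` is differentiable and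
its Jacobian is `∇ₓ v*(x,t) = (t/(1-t²)²) Cov_t(x) - (t/(1-t²)) I_d`. -/
theorem jacobian_velocity
    (d : ℕ) (hd : 1 ≤ d)
    (π₁ : Measure (EuclideanSpace ℝ (Fin d))) [IsProbabilityMeasure π₁]
    (hsupp : ∀ᵐ x₁ ∂π₁, ∀ i, x₁ i ∈ Set.Icc (0 : ℝ) 1)
    (t : ℝ) (ht : t ∈ Set.Ico (0 : ℝ) 1) (x : EuclideanSpace ℝ (Fin d)) :
    DifferentiableAt ℝ (fun y => vStar d π₁ y t) x ∧
    ∀ i j : Fin d,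
      fderiv ℝ (fun y => vStar d π₁ y t) x (EuclideanSpace.single j 1) i
        = ((t / (1 - t ^ 2) ^ 2) • covMat d π₁ t x
            - (t / (1 - t ^ 2)) • (1 : Matrix (Fin d) (Fin d) ℝ)) i j := by
  obtain ⟨ht0, ht1⟩ := ht
  have ht2 : t ^ 2 < 1 := by nlinarith
  have hc : (0:ℝ) < 1 - t ^ 2 := by linarith
  have hcne : (1 - t ^ 2) ≠ 0 := ne_of_gt hc
  -- derivative of phi
  obtain ⟨hφ', hφint⟩ := key (π₁ := π₁) (G := ℝ) ht0 ht1 hsupp x (fun _ => (1:ℝ))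
    continuous_const zero_le_one (Filter.Eventually.of_forall fun _ => by norm_num)
  have hφ : HasFDerivAt (phiFn d π₁ t)
      (∫ x₁, (Dg d t x x₁).smulRight (1:ℝ) ∂π₁) x := by
    have heq : (fun y => ∫ x₁, gKer d t y x₁ • (1:ℝ) ∂π₁) = phiFn d π₁ t := by
      funext y; simp [phiFn]
    rw [← heq]; exact hφ'
  obtain ⟨hI, hIint⟩ := key (π₁ := π₁) (G := EuclideanSpace ℝ (Fin d)) ht0 ht1 hsupp x
    (fun x₁ => x₁) continuous_id (Real.sqrt_nonneg _) (ae_norm_le hsupp)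
  have ha : 0 < phiFn d π₁ t x := phiFn_pos ht0 ht2 x hsupp
  set Lφ := ∫ x₁, (Dg d t x x₁).smulRight (1:ℝ) ∂π₁ with hLφdef
  set LI := ∫ x₁, (Dg d t x x₁).smulRight x₁ ∂π₁ with hLIdef
  set Iv := ∫ x₁, gKer d t x x₁ • x₁ ∂π₁ with hIvdef
  have hinv : HasFDerivAt (fun y => (phiFn d π₁ t y)⁻¹)
      ((-(phiFn d π₁ t x ^ 2)⁻¹) • Lφ) x :=
    (hasDerivAt_inv ha.ne').comp_hasFDerivAt x hφ
  have hm : HasFDerivAt (mFn d π₁ t)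
      ((phiFn d π₁ t x)⁻¹ • LI + ((-(phiFn d π₁ t x ^ 2)⁻¹) • Lφ).smulRight Iv) x :=
    hinv.smul hI
  have hv : HasFDerivAt (fun y => vStar d π₁ y t)
      ((1 / (1 - t ^ 2)) • ((phiFn d π₁ t x)⁻¹ • LI +
          ((-(phiFn d π₁ t x ^ 2)⁻¹) • Lφ).smulRight Iv)
        - (t / (1 - t ^ 2)) • ContinuousLinearMap.id ℝ (EuclideanSpace ℝ (Fin d))) x :=
    (hm.const_smul (1 / (1 - t ^ 2))).sub ((hasFDerivAt_id x).const_smul (t / (1 - t ^ 2)))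
  refine ⟨hv.differentiableAt, ?_⟩
  intro i j
  rw [hv.fderiv]
  -- integrability of the basic integrands
  have hg_int : Integrable (fun x₁ => gKer d t x x₁) π₁ := by
    have := integrable_gKer_mul (π₁ := π₁) ht2 x (fun _ => 1) continuous_const
      (Filter.Eventually.of_forall fun _ => by norm_num)
    simpa using this
  have hcoord : ∀ᵐ x₁ ∂π₁, ∀ k, |x₁ k| ≤ 1 := by
    filter_upwards [hsupp] with x₁ h k
    exact abs_le.mpr ⟨by linarith [(h k).1], (h k).2⟩
  have hgi_int : ∀ k, Integrable (fun x₁ => gKer d t x x₁ * x₁ k) π₁ := by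
    intro k
    refine integrable_gKer_mul ht2 x _ (EuclideanSpace.proj (𝕜 := ℝ) k).continuous ?_
    filter_upwards [hcoord] with x₁ h using h k
  have hgij_int : ∀ k l, Integrable (fun x₁ => gKer d t x x₁ * (x₁ k * x₁ l)) π₁ := by
    intro k l
    refine integrable_gKer_mul ht2 x _
      ((EuclideanSpace.proj (𝕜 := ℝ) k).continuous.mul
        (EuclideanSpace.proj (𝕜 := ℝ) l).continuous) ?_
    filter_upwards [hcoord] with x₁ h
    rw [abs_mul]
    exact mul_le_one₀ (h k) (abs_nonneg _) (h l)
  have hIg := integrable_gKer_smul (π₁ := π₁) ht2 x hsupp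
  -- coordinates of the vector integral
  have hIv_app : ∀ k, Iv k = ∫ x₁, gKer d t x x₁ * x₁ k ∂π₁ := by
    intro k
    calc Iv k = EuclideanSpace.proj (𝕜 := ℝ) k Iv := rfl
      _ = ∫ x₁, EuclideanSpace.proj (𝕜 := ℝ) k (gKer d t x x₁ • x₁) ∂π₁ :=
        ((EuclideanSpace.proj (𝕜 := ℝ) k).integral_comp_comm hIg).symm
      _ = ∫ x₁, gKer d t x x₁ * x₁ k ∂π₁ := rfl
  -- values of Dg on basis vectors
  have hDapp : ∀ x₁ : EuclideanSpace ℝ (Fin d), Dg d t x x₁ (EuclideanSpace.single j 1)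
      = -(1 - t ^ 2)⁻¹ * gKer d t x x₁ * (x j - t * x₁ j) := by
    intro x₁
    simp only [Dg, ContinuousLinearMap.smul_apply, innerSL_apply_apply, smul_eq_mul]
    have : (inner ℝ (x - t • x₁) (EuclideanSpace.single j (1:ℝ)) : ℝ) = (x - t • x₁) j := by
      rw [EuclideanSpace.inner_single_right]
      simp
    rw [this]
    have : (x - t • x₁) j = x j - t * x₁ j := by
      simp [PiLp.sub_apply, PiLp.smul_apply, smul_eq_mul]
    rw [this]
  -- value of Lφ on basis vector
  have hLφ_val : Lφ (EuclideanSpace.single j 1)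
      = (-(1 - t ^ 2)⁻¹ * x j) * phiFn d π₁ t x
        + ((1 - t ^ 2)⁻¹ * t) * ∫ x₁, gKer d t x x₁ * x₁ j ∂π₁ := by
    rw [hLφdef, ContinuousLinearMap.integral_apply hφint]
    have h1 : ∀ x₁ : EuclideanSpace ℝ (Fin d),
        ((Dg d t x x₁).smulRight (1:ℝ)) (EuclideanSpace.single j 1)
        = (-(1 - t ^ 2)⁻¹ * x j) * gKer d t x x₁
          + ((1 - t ^ 2)⁻¹ * t) * (gKer d t x x₁ * x₁ j) := by
      intro x₁
      simp only [ContinuousLinearMap.smulRight_apply, hDapp, smul_eq_mul, mul_one]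
      ring
    rw [integral_congr_ae (Filter.Eventually.of_forall h1),
      integral_add ((hg_int).const_mul _) ((hgi_int j).const_mul _),
      integral_const_mul, integral_const_mul]
    rfl
  -- value of LI on basis vector, coordinate i
  have hLI_val : (LI (EuclideanSpace.single j 1)) i
      = (-(1 - t ^ 2)⁻¹ * x j) * (∫ x₁, gKer d t x x₁ * x₁ i ∂π₁)
        + ((1 - t ^ 2)⁻¹ * t) * ∫ x₁, gKer d t x x₁ * (x₁ i * x₁ j) ∂π₁ := by
    have h1 : Integrable (fun x₁ => (Dg d t x x₁ (EuclideanSpace.single j 1)) • x₁) π₁ := by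
      have h2 := hIint.apply_continuousLinearMap (EuclideanSpace.single j 1)
      refine h2.congr (Filter.Eventually.of_forall fun x₁ => ?_)
      simp only [ContinuousLinearMap.smulRight_apply]
    rw [hLIdef, ContinuousLinearMap.integral_apply hIint]
    have h3 : (∫ x₁, ((Dg d t x x₁).smulRight x₁) (EuclideanSpace.single j 1) ∂π₁)
        = ∫ x₁, (Dg d t x x₁ (EuclideanSpace.single j 1)) • x₁ ∂π₁ :=
      integral_congr_ae (Filter.Eventually.of_forall fun x₁ => by
        simp only [ContinuousLinearMap.smulRight_apply])
    rw [h3]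
    calc (∫ x₁, (Dg d t x x₁ (EuclideanSpace.single j 1)) • x₁ ∂π₁) i
        = ∫ x₁, EuclideanSpace.proj (𝕜 := ℝ) i
            ((Dg d t x x₁ (EuclideanSpace.single j 1)) • x₁) ∂π₁ :=
          ((EuclideanSpace.proj (𝕜 := ℝ) i).integral_comp_comm h1).symm
      _ = ∫ x₁, (-(1 - t ^ 2)⁻¹ * x j) * (gKer d t x x₁ * x₁ i)
            + ((1 - t ^ 2)⁻¹ * t) * (gKer d t x x₁ * (x₁ i * x₁ j)) ∂π₁ := by
          refine integral_congr_ae (Filter.Eventually.of_forall fun x₁ => ?_)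
          simp only [hDapp]
          show (((-(1 - t ^ 2)⁻¹ * gKer d t x x₁ * (x j - t * x₁ j))) • x₁) i = _
          rw [PiLp.smul_apply, smul_eq_mul]
          ring
      _ = (-(1 - t ^ 2)⁻¹ * x j) * (∫ x₁, gKer d t x x₁ * x₁ i ∂π₁)
            + ((1 - t ^ 2)⁻¹ * t) * ∫ x₁, gKer d t x x₁ * (x₁ i * x₁ j) ∂π₁ := by
          rw [integral_add ((hgi_int i).const_mul _) ((hgij_int i j).const_mul _),
            integral_const_mul, integral_const_mul]
  -- coordinates of mFn
  have hm_app : ∀ k, mFn d π₁ t x k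
      = (phiFn d π₁ t x)⁻¹ * ∫ x₁, gKer d t x x₁ * x₁ k ∂π₁ := by
    intro k
    have : mFn d π₁ t x k = (phiFn d π₁ t x)⁻¹ * Iv k := rfl
    rw [this, hIv_app k]
  -- now compute both sides
  simp only [ContinuousLinearMap.coe_sub', Pi.sub_apply, ContinuousLinearMap.coe_smul',
    Pi.smul_apply, ContinuousLinearMap.add_apply, ContinuousLinearMap.smul_apply,
    ContinuousLinearMap.smulRight_apply, ContinuousLinearMap.coe_id', id_eq,
    PiLp.sub_apply, PiLp.smul_apply, PiLp.add_apply, smul_eq_mul]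
  rw [hLI_val, hLφ_val, hIv_app i]
  simp only [covMat, MMat, Matrix.sub_apply, Matrix.smul_apply, Matrix.of_apply,
    Matrix.one_apply, smul_eq_mul, hm_app]
  rw [EuclideanSpace.single_apply]
  have hane : phiFn d π₁ t x ≠ 0 := ha.ne'
  by_cases hij : i = j
  · subst hij
    simp only [if_pos rfl]
    field_simp
    ring
  · rw [if_neg hij]
    field_simp
    ring
end

section
/- Let T > 0 and γ ≥ 0, and let v*, v̂ : ℝ^d × [0,T] → ℝ^d be such that for every t ∈ [0,T] the map v̂(·, t) is γ-Lipschitz: ‖v̂(x, t) − v̂(y, t)‖ ≤ γ‖x − y‖ for all x, y ∈ ℝ^d. Let X, X̃ : [0,T] → ℝ^d be differentiable curves with continuous derivatives satisfying X'(t) = v*(X(t), t) and X̃'(t) = v̂(X̃(t), t) for all t ∈ [0,T], and X(0) = X̃(0). Then ‖X(T) − X̃(T)‖² ≤ e^{(1+2γ)T} ∫₀^T ‖v*(X(t), t) − v̂(X(t), t)‖² dt. -/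
open intervalIntegral

/-- **Stability of the flow ODE (Grönwall estimate).**  If `v̂(·,t)` is `γ`-Lipschitz for
every `t ∈ [0,T]`, `X` solves `X' = v*(X,t)`, `X̃` solves `X̃' = v̂(X̃,t)`, both with
continuous derivatives on `[0,T]` and the same initial point, then
`‖X(T) - X̃(T)‖² ≤ e^{(1+2γ)T} ∫₀^T ‖v*(X(t),t) - v̂(X(t),t)‖² dt`. -/
theorem flow_stability_gronwall
    {d : ℕ} (hd : 1 ≤ d)
    (T γ : ℝ) (hT : 0 < T) (hγ : 0 ≤ γ)
    (vstar vhat : EuclideanSpace ℝ (Fin d) → ℝ → EuclideanSpace ℝ (Fin d))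
    (hlip : ∀ t ∈ Set.Icc (0 : ℝ) T, ∀ x y : EuclideanSpace ℝ (Fin d),
      ‖vhat x t - vhat y t‖ ≤ γ * ‖x - y‖)
    (X Xtil : ℝ → EuclideanSpace ℝ (Fin d))
    (hX : ∀ t ∈ Set.Icc (0 : ℝ) T, HasDerivAt X (vstar (X t) t) t)
    (hXtil : ∀ t ∈ Set.Icc (0 : ℝ) T, HasDerivAt Xtil (vhat (Xtil t) t) t)
    (hX0 : X 0 = Xtil 0)
    (hcontX : ContinuousOn (fun t => vstar (X t) t) (Set.Icc 0 T))
    (hcontXtil : ContinuousOn (fun t => vhat (Xtil t) t) (Set.Icc 0 T))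
    (hint : IntervalIntegrable (fun t => ‖vstar (X t) t - vhat (X t) t‖ ^ 2)
      MeasureTheory.volume 0 T) :
    ‖X T - Xtil T‖ ^ 2
      ≤ Real.exp ((1 + 2 * γ) * T) * ∫ t in (0 : ℝ)..T, ‖vstar (X t) t - vhat (X t) t‖ ^ 2 := by
  set lam : ℝ := 1 + 2 * γ with hlam
  have hlam_pos : 0 < lam := by positivity
  set D : ℝ → EuclideanSpace ℝ (Fin d) := fun s => X s - Xtil s with hDdef
  set D' : ℝ → EuclideanSpace ℝ (Fin d) := fun s => vstar (X s) s - vhat (Xtil s) s with hD'def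
  set f : ℝ → ℝ := fun s => ‖vstar (X s) s - vhat (X s) s‖ ^ 2 with hfdef
  set G : ℝ → ℝ := fun s => Real.exp (-lam * s) * ‖D s‖ ^ 2 with hGdef
  set G' : ℝ → ℝ := fun s =>
    Real.exp (-lam * s) * (2 * (inner ℝ (D s) (D' s) : ℝ) - lam * ‖D s‖ ^ 2) with hG'def
  have hIcc : Set.uIcc (0 : ℝ) T = Set.Icc 0 T := Set.uIcc_of_le hT.le
  -- derivative of D and of ‖D‖²
  have hDeriv : ∀ t ∈ Set.Icc (0 : ℝ) T, HasDerivAt D (D' t) t := fun t ht =>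
    (hX t ht).sub (hXtil t ht)
  have hnormsq : ∀ t ∈ Set.Icc (0 : ℝ) T,
      HasDerivAt (fun s => ‖D s‖ ^ 2) (2 * (inner ℝ (D t) (D' t) : ℝ)) t := by
    intro t ht
    have h := (hDeriv t ht).inner ℝ (hDeriv t ht)
    have heq : (fun s => (inner ℝ (D s) (D s) : ℝ)) = fun s => ‖D s‖ ^ 2 := by
      funext s; rw [real_inner_self_eq_norm_sq]
    rw [heq] at h
    refine h.congr_deriv ?_
    rw [real_inner_comm (D' t) (D t)]; ring
  -- derivative of G
  have hGderiv : ∀ t ∈ Set.Icc (0 : ℝ) T, HasDerivAt G (G' t) t := by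
    intro t ht
    have hexp : HasDerivAt (fun s => Real.exp (-lam * s)) (Real.exp (-lam * t) * (-lam)) t := by
      simpa using ((hasDerivAt_id t).const_mul (-lam)).exp
    have := hexp.mul (hnormsq t ht)
    refine this.congr_deriv ?_
    simp only [hG'def]; ring
  -- pointwise bound G' ≤ f on [0,T]
  have hbound : ∀ t ∈ Set.Icc (0 : ℝ) T, G' t ≤ f t := by
    intro t ht
    have ha : (0:ℝ) ≤ ‖D t‖ := norm_nonneg _
    have hkey : 2 * (inner ℝ (D t) (D' t) : ℝ) - lam * ‖D t‖ ^ 2 ≤ f t := by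
      have hsplit : (inner ℝ (D t) (D' t) : ℝ)
          = (inner ℝ (D t) (vstar (X t) t - vhat (X t) t) : ℝ)
            + (inner ℝ (D t) (vhat (X t) t - vhat (Xtil t) t) : ℝ) := by
        rw [← inner_add_right]
        congr 1
        simp only [hD'def]
        abel
      have h1 : (inner ℝ (D t) (vstar (X t) t - vhat (X t) t) : ℝ)
          ≤ ‖D t‖ * ‖vstar (X t) t - vhat (X t) t‖ := real_inner_le_norm _ _
      have h2 : (inner ℝ (D t) (vhat (X t) t - vhat (Xtil t) t) : ℝ)
          ≤ γ * ‖D t‖ ^ 2 := by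
        calc (inner ℝ (D t) (vhat (X t) t - vhat (Xtil t) t) : ℝ)
            ≤ ‖D t‖ * ‖vhat (X t) t - vhat (Xtil t) t‖ := real_inner_le_norm _ _
          _ ≤ ‖D t‖ * (γ * ‖X t - Xtil t‖) := by
              exact mul_le_mul_of_nonneg_left (hlip t ht _ _) ha
          _ = γ * ‖D t‖ ^ 2 := by rw [hDdef]; ring
      have h2ab : 2 * (‖D t‖ * ‖vstar (X t) t - vhat (X t) t‖)
          ≤ ‖D t‖ ^ 2 + ‖vstar (X t) t - vhat (X t) t‖ ^ 2 := by
        nlinarith [sq_nonneg (‖D t‖ - ‖vstar (X t) t - vhat (X t) t‖)]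
      simp only [hfdef, hlam]
      nlinarith
    have hexp1 : Real.exp (-lam * t) ≤ 1 := by
      apply Real.exp_le_one_iff.mpr
      nlinarith [ht.1]
    have hf0 : 0 ≤ f t := by positivity
    calc G' t ≤ Real.exp (-lam * t) * f t :=
          mul_le_mul_of_nonneg_left hkey (Real.exp_nonneg _)
      _ ≤ 1 * f t := mul_le_mul_of_nonneg_right hexp1 hf0
      _ = f t := one_mul _
  -- G' is continuous on [0,T], hence interval integrable
  have hcontD : ContinuousOn D (Set.Icc (0:ℝ) T) := fun t ht =>
    ((hDeriv t ht).continuousAt).continuousWithinAt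
  have hcontD' : ContinuousOn D' (Set.Icc (0:ℝ) T) := hcontX.sub hcontXtil
  have hcontG' : ContinuousOn G' (Set.Icc (0:ℝ) T) := by
    apply ContinuousOn.mul
    · exact (Real.continuous_exp.comp (continuous_const.mul continuous_id)).continuousOn
    · apply ContinuousOn.sub
      · exact (continuousOn_const.mul (hcontD.inner hcontD'))
      · exact continuousOn_const.mul ((hcontD.norm).pow 2)
  have hintG' : IntervalIntegrable G' MeasureTheory.volume 0 T := by
    apply ContinuousOn.intervalIntegrable
    rwa [hIcc]
  -- FTC
  have hFTC : ∫ s in (0:ℝ)..T, G' s = G T - G 0 := by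
    apply intervalIntegral.integral_eq_sub_of_hasDerivAt
    · intro t ht; exact hGderiv t (hIcc ▸ ht)
    · exact hintG'
  have hmono : ∫ s in (0:ℝ)..T, G' s ≤ ∫ s in (0:ℝ)..T, f s :=
    intervalIntegral.integral_mono_on hT.le hintG' hint hbound
  have hG0 : G 0 = 0 := by
    simp [hGdef, hDdef, hX0]
  have hGT : G T ≤ ∫ s in (0:ℝ)..T, f s := by
    have := hFTC ▸ hmono
    linarith [this]
  -- conclude
  have hGTval : G T = Real.exp (-lam * T) * ‖X T - Xtil T‖ ^ 2 := rfl
  have hpos : 0 < Real.exp (-lam * T) := Real.exp_pos _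
  have : Real.exp (-lam * T) * ‖X T - Xtil T‖ ^ 2 ≤ ∫ s in (0:ℝ)..T, f s := hGTval ▸ hGT
  have hfin : ‖X T - Xtil T‖ ^ 2 ≤ Real.exp (lam * T) * ∫ s in (0:ℝ)..T, f s := by
    have h := mul_le_mul_of_nonneg_left this (Real.exp_nonneg (lam * T))
    rwa [← mul_assoc, ← Real.exp_add, show lam * T + -lam * T = (0:ℝ) by ring,
      Real.exp_zero, one_mul] at h
  exact hfin
end

section
/- Let T > 0, B ≥ 0, γ_x ≥ 0, γ_t ≥ 0, and let v̂ : ℝ^d × [0,T] → ℝ^d satisfy ‖v̂(x, t)‖ ≤ B for all x, t; ‖v̂(x, t) − v̂(y, t)‖ ≤ γ_x ‖x − y‖ for all x, y ∈ ℝ^d and t ∈ [0,T]; and ‖v̂(x, s) − v̂(x, t)‖ ≤ γ_t |s − t| for all x ∈ ℝ^d and s, t ∈ [0,T]. Let 0 = t₀ < t₁ < ⋯ < t_N = T be discretization points. Let X̃ : [0,T] → ℝ^d be differentiable with X̃'(t) = v̂(X̃(t), t) for all t, and let X̂ : [0,T] → ℝ^d be the explicit Euler interpolation: X̂(t) = X̂(t_k)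 + (t − t_k) v̂(X̂(t_k), t_k) for t ∈ [t_k, t_{k+1}], k = 0, …, N−1, with X̂(0) = X̃(0). Then ‖X̃(T) − X̂(T)‖² ≤ (1/3) e^{2(γ_x + 1)T} (γ_x² B² + γ_t²) Σ_{k=0}^{N−1} (t_{k+1} − t_k)³. -/
set_option maxHeartbeats 1000000

open Set

open Set

/-- Grönwall-type estimate with a linearly growing forcing term. -/
lemma gronwall_quad {E : Type*} [NormedAddCommGroup E] [NormedSpace ℝ E]
    {f f' : ℝ → E} {a b K c : ℝ} (hab : a ≤ b) (hK : 0 ≤ K) (hc : 0 ≤ c)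
    (hf : ContinuousOn f (Set.Icc a b))
    (hf' : ∀ x ∈ Set.Ico a b, HasDerivWithinAt f (f' x) (Set.Ici x) x)
    (bound : ∀ x ∈ Set.Ico a b, ‖f' x‖ ≤ K * ‖f x‖ + c * (x - a)) :
    ‖f b‖ ≤ (‖f a‖ + c / 2 * (b - a) ^ 2) * Real.exp (K * (b - a)) := by
  have key : ∀ ε > 0, ‖f b‖ ≤
      (‖f a‖ + ε * (b - a) + c / 2 * (b - a) ^ 2) * Real.exp (K * (b - a)) := by
    intro ε hε
    set Bf : ℝ → ℝ := fun t => (‖f a‖ + ε * (t - a) + c / 2 * (t - a) ^ 2)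
        * Real.exp (K * (t - a)) with hBf
    set Bf' : ℝ → ℝ := fun t => (ε + c * (t - a)) * Real.exp (K * (t - a)) + K * Bf t with hBf'
    have hB : ∀ x, HasDerivAt Bf (Bf' x) x := by
      intro x
      have ha1 : HasDerivAt (fun t : ℝ => t - a) 1 x := (hasDerivAt_id x).sub_const a
      have h1 : HasDerivAt (fun t : ℝ => ‖f a‖ + ε * (t - a) + c / 2 * (t - a) ^ 2)
          (ε + c * (x - a)) x := by
        have h2 := (ha1.pow 2).const_mul (c / 2)
        have h3 := ((ha1.const_mul ε).const_add ‖f a‖).add h2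
        refine h3.congr_deriv ?_
        simp
        ring
      have h2 : HasDerivAt (fun t : ℝ => Real.exp (K * (t - a)))
          (Real.exp (K * (x - a)) * K) x := by
        have := (ha1.const_mul K).exp
        convert this using 1
        ring
      have := h1.mul h2
      refine this.congr_deriv ?_
      simp only [hBf, hBf']
      ring
    have hb : b ∈ Set.Icc a b := ⟨hab, le_rfl⟩
    have hBa : ‖f a‖ ≤ Bf a := by simp [hBf]
    refine image_norm_le_of_norm_deriv_right_lt_deriv_boundary hf hf' hBa hB ?_ hb
    intro x hx hfx
    have hxa : (0:ℝ) ≤ x - a := sub_nonneg.2 hx.1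
    have hexp : (1:ℝ) ≤ Real.exp (K * (x - a)) := Real.one_le_exp (mul_nonneg hK hxa)
    have hb1 : ‖f' x‖ ≤ K * Bf x + c * (x - a) := by
      have := bound x hx; rw [hfx] at this; linarith
    have : c * (x - a) < (ε + c * (x - a)) * Real.exp (K * (x - a)) := by
      nlinarith [mul_nonneg hc hxa]
    simp only [hBf']
    linarith
  refine le_of_forall_pos_le_add ?_
  intro δ hδ
  set C : ℝ := (b - a) * Real.exp (K * (b - a)) with hC
  have hC0 : 0 ≤ C := mul_nonneg (sub_nonneg.2 hab) (Real.exp_pos _).le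
  have hε : (0:ℝ) < δ / (C + 1) := by positivity
  have h1 := key (δ / (C + 1)) hε
  have h2 : δ / (C + 1) * C ≤ δ := by
    rw [div_mul_eq_mul_div, div_le_iff₀ (by linarith : (0:ℝ) < C + 1)]
    nlinarith
  have h3 : (‖f a‖ + δ / (C + 1) * (b - a) + c / 2 * (b - a) ^ 2) * Real.exp (K * (b - a))
      = (‖f a‖ + c / 2 * (b - a) ^ 2) * Real.exp (K * (b - a)) + δ / (C + 1) * C := by
    simp only [hC]; ring
  rw [h3] at h1
  linarith

/-- **Euler discretization error.**  Let `v̂` be bounded by `B`, `γₓ`-Lipschitz in `x` and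
`γₜ`-Lipschitz in `t` on `ℝ^d × [0,T]`, let `0 = t₀ < t₁ < ⋯ < t_N = T` be discretization
points, let `X̃` solve `X̃' = v̂(X̃,t)` and let `X̂` be the explicit Euler interpolation with
the same starting point.  Then
`‖X̃(T) - X̂(T)‖² ≤ (1/3) e^{2(γₓ+1)T} (γₓ²B² + γₜ²) Σ_k (t_{k+1} - t_k)³`. -/
theorem euler_discretization_error
    {d : ℕ} (hd : 1 ≤ d)
    (T B γx γt : ℝ) (hT : 0 < T) (hB : 0 ≤ B) (hγx : 0 ≤ γx) (hγt : 0 ≤ γt)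
    (vhat : EuclideanSpace ℝ (Fin d) → ℝ → EuclideanSpace ℝ (Fin d))
    (hbound : ∀ x : EuclideanSpace ℝ (Fin d), ∀ t ∈ Set.Icc (0 : ℝ) T, ‖vhat x t‖ ≤ B)
    (hlipx : ∀ t ∈ Set.Icc (0 : ℝ) T, ∀ x y : EuclideanSpace ℝ (Fin d),
      ‖vhat x t - vhat y t‖ ≤ γx * ‖x - y‖)
    (hlipt : ∀ x : EuclideanSpace ℝ (Fin d), ∀ s ∈ Set.Icc (0 : ℝ) T, ∀ t ∈ Set.Icc (0 : ℝ) T,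
      ‖vhat x s - vhat x t‖ ≤ γt * |s - t|)
    (N : ℕ) (hN : 0 < N) (tk : ℕ → ℝ)
    (htk0 : tk 0 = 0) (htkN : tk N = T)
    (htkmono : ∀ k < N, tk k < tk (k + 1))
    (Xtil Xhat : ℝ → EuclideanSpace ℝ (Fin d))
    (hXtil : ∀ t ∈ Set.Icc (0 : ℝ) T, HasDerivAt Xtil (vhat (Xtil t) t) t)
    (hXhat : ∀ k < N, ∀ s ∈ Set.Icc (tk k) (tk (k + 1)),
      Xhat s = Xhat (tk k) + (s - tk k) • vhat (Xhat (tk k)) (tk k))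
    (hinit : Xhat 0 = Xtil 0) :
    ‖Xtil T - Xhat T‖ ^ 2
      ≤ (1 / 3) * Real.exp (2 * (γx + 1) * T) * (γx ^ 2 * B ^ 2 + γt ^ 2) *
          ∑ k ∈ Finset.range N, (tk (k + 1) - tk k) ^ 3 := by
  -- monotonicity facts about the grid
  have hmono : ∀ j k : ℕ, j ≤ k → k ≤ N → tk j ≤ tk k := by
    intro j k hjk hkN
    induction k with
    | zero => simp [Nat.le_zero.1 hjk]
    | succ n ih =>
      rcases Nat.lt_succ_iff_lt_or_eq.1 (Nat.lt_succ_of_le hjk) with h | h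
      · exact (ih (Nat.lt_succ_iff.1 h) (le_of_lt (Nat.lt_of_lt_of_le (Nat.lt_succ_self n)
          hkN))).trans (htkmono n (Nat.lt_of_succ_le hkN)).le
      · exact le_of_eq (congrArg tk h)
  have htmem : ∀ k, k ≤ N → tk k ∈ Set.Icc (0:ℝ) T := by
    intro k hk
    constructor
    · rw [← htk0]; exact hmono 0 k (Nat.zero_le _) hk
    · rw [← htkN]; exact hmono k N hk le_rfl
  set c : ℝ := γx * B + γt with hcdef
  have hc0 : 0 ≤ c := by positivity
  -- key interval estimate
  have key : ∀ k < N, ‖Xtil (tk (k+1)) - Xhat (tk (k+1))‖ ≤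
      (‖Xtil (tk k) - Xhat (tk k)‖ + c / 2 * (tk (k+1) - tk k) ^ 2)
        * Real.exp (γx * (tk (k+1) - tk k)) := by
    intro k hk
    set a := tk k with hadef
    set b := tk (k+1) with hbdef
    have hab : a ≤ b := (htkmono k hk).le
    have haT : a ∈ Set.Icc (0:ℝ) T := htmem k hk.le
    have hbT : b ∈ Set.Icc (0:ℝ) T := htmem (k+1) hk
    have hsub : ∀ x ∈ Set.Icc a b, x ∈ Set.Icc (0:ℝ) T :=
      fun x hx => ⟨haT.1.trans hx.1, hx.2.trans hbT.2⟩
    set v := vhat (Xhat a) a with hvdef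
    have hXhat_eq : ∀ s ∈ Set.Icc a b, Xhat s = Xhat a + (s - a) • v := hXhat k hk
    have hcontXtil : ContinuousOn Xtil (Set.Icc a b) := fun x hx =>
      (hXtil x (hsub x hx)).continuousAt.continuousWithinAt
    have hcontXhat : ContinuousOn Xhat (Set.Icc a b) := by
      have : ContinuousOn (fun s : ℝ => Xhat a + (s - a) • v) (Set.Icc a b) :=
        (continuous_const.add ((continuous_id.sub continuous_const).smul
          continuous_const)).continuousOn
      exact this.congr hXhat_eq
    have hcont : ContinuousOn (fun t => Xtil t - Xhat t) (Set.Icc a b) :=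
      hcontXtil.sub hcontXhat
    have hderiv : ∀ x ∈ Set.Ico a b,
        HasDerivWithinAt (fun t => Xtil t - Xhat t) (vhat (Xtil x) x - v) (Set.Ici x) x := by
      intro x hx
      have hx0T : x ∈ Set.Icc (0:ℝ) T := hsub x ⟨hx.1, hx.2.le⟩
      have h1 : HasDerivWithinAt Xtil (vhat (Xtil x) x) (Set.Ici x) x :=
        (hXtil x hx0T).hasDerivWithinAt
      have haff : HasDerivAt (fun t : ℝ => Xhat a + (t - a) • v) v x := by
        have := (((hasDerivAt_id x).sub_const a).smul_const v).const_add (Xhat a)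
        simpa using this
      have hev : Xhat =ᶠ[nhdsWithin x (Set.Ici x)] (fun t : ℝ => Xhat a + (t - a) • v) := by
        have hmem : Set.Iic b ∈ nhdsWithin x (Set.Ici x) :=
          nhdsWithin_le_nhds (Iic_mem_nhds hx.2)
        filter_upwards [hmem, self_mem_nhdsWithin] with t ht1 ht2
        exact hXhat_eq t ⟨le_trans hx.1 ht2, ht1⟩
      have h2 : HasDerivWithinAt Xhat v (Set.Ici x) x :=
        haff.hasDerivWithinAt.congr_of_eventuallyEq hev (hXhat_eq x ⟨hx.1, hx.2.le⟩)
      exact h1.sub h2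
    have hbnd : ∀ x ∈ Set.Ico a b,
        ‖vhat (Xtil x) x - v‖ ≤ γx * ‖Xtil x - Xhat x‖ + c * (x - a) := by
      intro x hx
      have hx0T : x ∈ Set.Icc (0:ℝ) T := hsub x ⟨hx.1, hx.2.le⟩
      have hxa : (0:ℝ) ≤ x - a := sub_nonneg.2 hx.1
      have e1 : ‖vhat (Xtil x) x - vhat (Xhat x) x‖ ≤ γx * ‖Xtil x - Xhat x‖ :=
        hlipx x hx0T _ _
      have e2 : ‖vhat (Xhat x) x - vhat (Xhat a) x‖ ≤ γx * ‖Xhat x - Xhat a‖ :=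
        hlipx x hx0T _ _
      have e2' : ‖Xhat x - Xhat a‖ = (x - a) * ‖v‖ := by
        rw [hXhat_eq x ⟨hx.1, hx.2.le⟩]
        simp [norm_smul, abs_of_nonneg hxa]
      have e3 : ‖vhat (Xhat a) x - vhat (Xhat a) a‖ ≤ γt * (x - a) := by
        have := hlipt (Xhat a) x hx0T a haT
        rwa [abs_of_nonneg hxa] at this
      have ev : ‖v‖ ≤ B := hbound _ a haT
      have tri : ‖vhat (Xtil x) x - v‖ ≤ ‖vhat (Xtil x) x - vhat (Xhat x) x‖
          + ‖vhat (Xhat x) x - vhat (Xhat a) x‖ + ‖vhat (Xhat a) x - vhat (Xhat a) a‖ := by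
        have : vhat (Xtil x) x - v = (vhat (Xtil x) x - vhat (Xhat x) x)
            + (vhat (Xhat x) x - vhat (Xhat a) x) + (vhat (Xhat a) x - vhat (Xhat a) a) := by
          rw [hvdef]; abel
        rw [this]
        exact norm_add₃_le
      have e2'' : γx * ‖Xhat x - Xhat a‖ ≤ γx * B * (x - a) := by
        rw [e2']
        nlinarith [norm_nonneg v, mul_nonneg hγx hxa]
      rw [hcdef]
      nlinarith [e1, e2, e3, tri, e2'']
    have := gronwall_quad hab hγx hc0 hcont hderiv hbnd
    simpa using this
  -- induction along the grid
  have Ek : ∀ k, k ≤ N → ‖Xtil (tk k) - Xhat (tk k)‖ ≤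
      c / 2 * (∑ j ∈ Finset.range k, (tk (j+1) - tk j) ^ 2) * Real.exp (γx * tk k) := by
    intro k
    induction k with
    | zero => intro _; simp [htk0, hinit]
    | succ k ih =>
      intro hk1
      have hk : k < N := hk1
      have h1 := key k hk
      have h2 := ih hk.le
      have htk0' : 0 ≤ tk k := (htmem k hk.le).1
      have hexp1 : (1:ℝ) ≤ Real.exp (γx * tk k) := Real.one_le_exp (mul_nonneg hγx htk0')
      have hh : (0:ℝ) ≤ tk (k+1) - tk k := (sub_nonneg.2 (htkmono k hk).le)
      have hS : (0:ℝ) ≤ ∑ j ∈ Finset.range k, (tk (j+1) - tk j) ^ 2 :=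
        Finset.sum_nonneg fun j _ => sq_nonneg _
      have step1 : ‖Xtil (tk k) - Xhat (tk k)‖ + c / 2 * (tk (k+1) - tk k) ^ 2 ≤
          c / 2 * ((∑ j ∈ Finset.range k, (tk (j+1) - tk j) ^ 2) + (tk (k+1) - tk k) ^ 2)
            * Real.exp (γx * tk k) := by
        nlinarith [mul_nonneg (mul_nonneg (by linarith : (0:ℝ) ≤ c / 2)
          (sq_nonneg (tk (k+1) - tk k))) (sub_nonneg.2 hexp1)]
      have hEE : Real.exp (γx * tk k) * Real.exp (γx * (tk (k+1) - tk k))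
          = Real.exp (γx * tk (k+1)) := by
        rw [← Real.exp_add]; congr 1; ring
      calc ‖Xtil (tk (k+1)) - Xhat (tk (k+1))‖
          ≤ (‖Xtil (tk k) - Xhat (tk k)‖ + c / 2 * (tk (k+1) - tk k) ^ 2)
            * Real.exp (γx * (tk (k+1) - tk k)) := h1
        _ ≤ (c / 2 * ((∑ j ∈ Finset.range k, (tk (j+1) - tk j) ^ 2) + (tk (k+1) - tk k) ^ 2)
            * Real.exp (γx * tk k)) * Real.exp (γx * (tk (k+1) - tk k)) :=
          mul_le_mul_of_nonneg_right step1 (Real.exp_pos _).le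
        _ = c / 2 * (∑ j ∈ Finset.range (k+1), (tk (j+1) - tk j) ^ 2)
            * Real.exp (γx * tk (k+1)) := by
          rw [Finset.sum_range_succ, mul_assoc, hEE]
  -- final assembly
  have hTfin := Ek N le_rfl
  rw [htkN] at hTfin
  set S2 : ℝ := ∑ j ∈ Finset.range N, (tk (j+1) - tk j) ^ 2 with hS2def
  set S3 : ℝ := ∑ k ∈ Finset.range N, (tk (k+1) - tk k) ^ 3 with hS3def
  have hS2 : 0 ≤ S2 := Finset.sum_nonneg fun j _ => sq_nonneg _
  have hhj : ∀ j ∈ Finset.range N, (0:ℝ) ≤ tk (j+1) - tk j := fun j hj =>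
    sub_nonneg.2 (htkmono j (Finset.mem_range.1 hj)).le
  have hS3 : 0 ≤ S3 := Finset.sum_nonneg fun j hj => pow_nonneg (hhj j hj) 3
  have hsum : ∑ j ∈ Finset.range N, (tk (j+1) - tk j) = T := by
    rw [Finset.sum_range_sub (fun i => tk i), htk0, htkN, sub_zero]
  have hcs : S2 ^ 2 ≤ T * S3 := by
    have := Finset.sum_sq_le_sum_mul_sum_of_sq_eq_mul (Finset.range N)
      (r := fun j => (tk (j+1) - tk j) ^ 2)
      (f := fun j => tk (j+1) - tk j)
      (g := fun j => (tk (j+1) - tk j) ^ 3)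
      hhj (fun j hj => pow_nonneg (hhj j hj) 3)
      (fun j _ => by ring)
    rw [hsum] at this
    exact this
  have hsq : ‖Xtil T - Xhat T‖ ^ 2 ≤ (c / 2 * S2 * Real.exp (γx * T)) ^ 2 :=
    pow_le_pow_left₀ (norm_nonneg _) hTfin 2
  set s : ℝ := γx ^ 2 * B ^ 2 + γt ^ 2 with hsdef
  have hs0 : 0 ≤ s := by positivity
  have hc2 : c ^ 2 ≤ 2 * s := by
    rw [hcdef, hsdef]; nlinarith [sq_nonneg (γx * B - γt)]
  have h1 : c ^ 2 * S2 ^ 2 ≤ (2 * s) * (T * S3) :=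
    mul_le_mul hc2 hcs (sq_nonneg _) (by positivity)
  have h32 : T / 2 ≤ (1/3) * Real.exp (2 * T) := by
    nlinarith [Real.add_one_le_exp (2 * T)]
  have hexpand : Real.exp (2 * (γx + 1) * T)
      = Real.exp (2 * T) * (Real.exp (γx * T)) ^ 2 := by
    rw [sq, ← Real.exp_add, ← Real.exp_add]; congr 1; ring
  clear_value c S2 S3 s
  calc ‖Xtil T - Xhat T‖ ^ 2
      ≤ (c / 2 * S2 * Real.exp (γx * T)) ^ 2 := hsq
    _ = c ^ 2 * S2 ^ 2 * (Real.exp (γx * T)) ^ 2 / 4 := by ring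
    _ ≤ (2 * s) * (T * S3) * (Real.exp (γx * T)) ^ 2 / 4 := by
        have h2 := mul_le_mul_of_nonneg_right h1 (sq_nonneg (Real.exp (γx * T)))
        linarith
    _ = T / 2 * (s * S3 * (Real.exp (γx * T)) ^ 2) := by ring
    _ ≤ (1/3) * Real.exp (2 * T) * (s * S3 * (Real.exp (γx * T)) ^ 2) := by
        have hnn : 0 ≤ s * S3 * (Real.exp (γx * T)) ^ 2 := by positivity
        exact mul_le_mul_of_nonneg_right h32 hnn
    _ = (1 / 3) * Real.exp (2 * (γx + 1) * T) * s * S3 := by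
        rw [hexpand]; ring
end
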